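/- Let f be a Hecke-multiplicative function and x ≥ 1 a real number. For any prime p with p² ≤ x, |f(p²)|² · Σ_{n ≤ x/p²} |f(n)|² ≤ 9 · Σ_{n ≤ x} |f(n)|². -/

import Mathlib

open Finset

def HeckeMult (f : ℕ → ℂ) : Prop :=
  f 1 = 1 ∧ ∀ m n : ℕ, 0 < m → 0 < n →
    f m * f n = ∑ d ∈ (Nat.gcd m n).divisors, f (m * n / d ^ 2)

lemma hecke_key (f : ℕ → ℂ) (hf : HeckeMult f) (p : ℕ) (hp : p.Prime) (n : ℕ) (hn : 0 < n) :
    f (p ^ 2) * f n = f (p ^ 2 * n) + (if p ∣ n then f n else 0)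
      + (if p ^ 2 ∣ n then f (n / p ^ 2) else 0) := by
  have hp0 : 0 < p := hp.pos
  have hp1 : 1 < p := hp.one_lt
  have h := hf.2 (p ^ 2) n (pow_pos hp0 2) hn
  obtain ⟨k, hk2, hgcd⟩ := (Nat.dvd_prime_pow hp).1 (Nat.gcd_dvd_left (p ^ 2) n)
  rw [hgcd, Nat.sum_divisors_prime_pow hp] at h
  have hdivn : p ^ 2 * n / p ^ 2 = n := Nat.mul_div_cancel_left n (pow_pos hp0 2)
  have hdiv2 : p ^ 2 * n / (p ^ 2) ^ 2 = n / p ^ 2 := by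
    rw [pow_two (p ^ 2), Nat.mul_div_mul_left _ _ (pow_pos hp0 2)]
  interval_cases k
  · have hpn : ¬ p ∣ n := by
      intro hd
      have h1 : p ∣ p ^ 0 := hgcd ▸ Nat.dvd_gcd (dvd_pow_self p two_ne_zero) hd
      rw [pow_zero] at h1
      have := Nat.le_of_dvd one_pos h1
      omega
    have hp2n : ¬ p ^ 2 ∣ n := fun hd => hpn ((dvd_pow_self p two_ne_zero).trans hd)
    rw [Finset.sum_range_succ, Finset.sum_range_zero, zero_add] at h
    simp only [pow_zero, one_pow, Nat.div_one] at h
    rw [if_neg hpn, if_neg hp2n, add_zero, add_zero]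
    exact h
  · have hpn : p ∣ n := by
      have : p ^ 1 ∣ n := hgcd ▸ Nat.gcd_dvd_right (p ^ 2) n
      simpa using this
    have hp2n : ¬ p ^ 2 ∣ n := by
      intro hd
      have h1 : p ^ 2 ∣ p ^ 1 := hgcd ▸ Nat.dvd_gcd (dvd_refl _) hd
      have := Nat.le_of_dvd (pow_pos hp0 1) h1
      simp only [pow_one] at this
      nlinarith
    rw [Finset.sum_range_succ, Finset.sum_range_one] at h
    simp only [pow_zero, one_pow, Nat.div_one, pow_one] at h
    rw [hdivn] at h
    rw [if_pos hpn, if_neg hp2n, add_zero]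
    exact h
  · have hp2n : p ^ 2 ∣ n := hgcd ▸ Nat.gcd_dvd_right (p ^ 2) n
    have hpn : p ∣ n := (dvd_pow_self p two_ne_zero).trans hp2n
    rw [Finset.sum_range_succ, Finset.sum_range_succ, Finset.sum_range_one] at h
    simp only [pow_zero, one_pow, Nat.div_one, pow_one] at h
    rw [hdivn, hdiv2] at h
    rw [if_pos hpn, if_pos hp2n]
    exact h

lemma sum_g_le (M : ℕ) (w : ℕ → ℝ) (hw : ∀ m, 0 ≤ w m) (S : Finset ℕ) (g : ℕ → ℕ)
    (hinj : Set.InjOn g S) (hmem : ∀ n ∈ S, g n ∈ Finset.Icc 1 M) :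
    ∑ n ∈ S, w (g n) ≤ ∑ m ∈ Finset.Icc 1 M, w m := by
  rw [← Finset.sum_image (fun a ha b hb hh => hinj ha hb hh)]
  refine Finset.sum_le_sum_of_subset_of_nonneg ?_ (fun m _ _ => hw m)
  intro m hm
  obtain ⟨n, hn, rfl⟩ := Finset.mem_image.1 hm
  exact hmem n hn

lemma abs_sq_three (a b c : ℂ) :
    ‖a + b + c‖ ^ 2 ≤ 3 * (‖a‖ ^ 2 + ‖b‖ ^ 2 + ‖c‖ ^ 2) := by
  have h1 : ‖a + b + c‖ ≤ ‖a‖ + ‖b‖ + ‖c‖ := by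
    calc ‖a + b + c‖ ≤ ‖a + b‖ + ‖c‖ := norm_add_le _ _
    _ ≤ ‖a‖ + ‖b‖ + ‖c‖ := by
        have := norm_add_le a b; linarith
  have ha := norm_nonneg a
  have hb := norm_nonneg b
  have hc := norm_nonneg c
  have h0 := norm_nonneg (a + b + c)
  nlinarith [sq_nonneg (‖a‖ - ‖b‖), sq_nonneg (‖a‖ - ‖c‖),
    sq_nonneg (‖b‖ - ‖c‖)]

theorem hecke_sum_p2 (f : ℕ → ℂ) (hf : HeckeMult f) (x : ℝ) (hx : 1 ≤ x)
    (p : ℕ) (hp : p.Prime) (hpx : ((p : ℝ)) ^ 2 ≤ x) :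
    ‖f (p ^ 2)‖ ^ 2 * ∑ n ∈ Finset.Icc 1 ⌊x / (p : ℝ) ^ 2⌋₊, ‖f n‖ ^ 2 ≤
      9 * ∑ n ∈ Finset.Icc 1 ⌊x⌋₊, ‖f n‖ ^ 2 := by
  have hp0 : 0 < p := hp.pos
  have hp2pos : (0:ℝ) < (p:ℝ) ^ 2 := by positivity
  have hp2one : (1:ℝ) ≤ (p:ℝ) ^ 2 := by
    have : (1:ℝ) ≤ (p:ℝ) := by exact_mod_cast hp0
    nlinarith
  set N := ⌊x / (p : ℝ) ^ 2⌋₊ with hN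
  set M := ⌊x⌋₊ with hM
  have hx0 : 0 ≤ x := by linarith
  have hNM : N ≤ M := Nat.floor_le_floor (by
    rw [div_le_iff₀ hp2pos]; nlinarith [Nat.floor_le hx0])
  -- for n ≤ N, p^2 * n ≤ M
  have hkey : ∀ n ∈ Finset.Icc 1 N, p ^ 2 * n ∈ Finset.Icc 1 M := by
    intro n hn
    rw [Finset.mem_Icc] at hn ⊢
    constructor
    · exact Nat.one_le_iff_ne_zero.2
        (Nat.mul_ne_zero (pow_ne_zero 2 hp0.ne') (by omega))
    · have h1 : (n : ℝ) ≤ x / (p:ℝ)^2 := by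
        calc (n : ℝ) ≤ (N : ℝ) := by exact_mod_cast hn.2
          _ ≤ x / (p:ℝ)^2 := Nat.floor_le (by positivity)
      have h2 : ((p ^ 2 * n : ℕ) : ℝ) ≤ x := by
        push_cast
        rw [le_div_iff₀ hp2pos] at h1
        nlinarith
      exact Nat.le_floor h2
  set w : ℕ → ℝ := fun m => ‖f m‖ ^ 2 with hw
  have hw0 : ∀ m, 0 ≤ w m := fun m => sq_nonneg _
  have hstep : ∀ n ∈ Finset.Icc 1 N,
      ‖f (p ^ 2)‖ ^ 2 * w n ≤
        3 * (w (p ^ 2 * n) + w n + (if p ^ 2 ∣ n then w (n / p ^ 2) else 0)) := by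
    intro n hn
    rw [Finset.mem_Icc] at hn
    have hkeyn := hecke_key f hf p hp n hn.1
    have h1 : ‖f (p ^ 2)‖ ^ 2 * w n = ‖f (p ^ 2) * f n‖ ^ 2 := by
      rw [norm_mul, mul_pow]
    rw [h1, hkeyn]
    refine le_trans (abs_sq_three _ _ _) ?_
    refine mul_le_mul_of_nonneg_left (add_le_add (add_le_add le_rfl ?_) ?_) (by norm_num)
    · split_ifs with hd
      · exact le_rfl
      · simpa using hw0 n
    · split_ifs with hd
      · exact le_rfl
      · simp
  calc ‖f (p ^ 2)‖ ^ 2 * ∑ n ∈ Finset.Icc 1 N, w n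
      = ∑ n ∈ Finset.Icc 1 N, ‖f (p ^ 2)‖ ^ 2 * w n := by rw [Finset.mul_sum]
    _ ≤ ∑ n ∈ Finset.Icc 1 N, 3 * (w (p ^ 2 * n) + w n + (if p ^ 2 ∣ n then w (n / p ^ 2) else 0)) :=
        Finset.sum_le_sum hstep
    _ = 3 * ((∑ n ∈ Finset.Icc 1 N, w (p ^ 2 * n)) + (∑ n ∈ Finset.Icc 1 N, w n)
          + ∑ n ∈ Finset.Icc 1 N, (if p ^ 2 ∣ n then w (n / p ^ 2) else 0)) := by
        rw [← Finset.mul_sum, Finset.sum_add_distrib, Finset.sum_add_distrib]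
    _ ≤ 3 * ((∑ m ∈ Finset.Icc 1 M, w m) + (∑ m ∈ Finset.Icc 1 M, w m)
          + (∑ m ∈ Finset.Icc 1 M, w m)) := by
        gcongr
        · exact sum_g_le M w hw0 _ _ (fun a _ b _ hab =>
            Nat.eq_of_mul_eq_mul_left (pow_pos hp0 2) hab) hkey
        · rw [Finset.sum_ite, Finset.sum_const_zero, add_zero]
          refine sum_g_le M w hw0 _ (fun n => n / p ^ 2) ?_ ?_
          · intro a ha b hb hab
            simp only [Finset.coe_filter, Set.mem_setOf_eq] at ha hb
            have ha' : a / p ^ 2 * p ^ 2 = a := Nat.div_mul_cancel ha.2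
            have hb' : b / p ^ 2 * p ^ 2 = b := Nat.div_mul_cancel hb.2
            simp only at hab
            rw [← ha', ← hb', hab]
          · intro n hn
            simp only [Finset.mem_filter, Finset.mem_Icc] at hn
            obtain ⟨⟨h1n, hnN⟩, hdn⟩ := hn
            rw [Finset.mem_Icc]
            constructor
            · rw [Nat.one_le_div_iff (pow_pos hp0 2)]
              exact Nat.le_of_dvd h1n hdn
            · exact le_trans (Nat.div_le_self n _) (le_trans hnN hNM)
    _ = 9 * ∑ n ∈ Finset.Icc 1 M, w n := by ring
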